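/- Let τ be a face of an integral cone σ in a lattice L, and suppose that the subgroup of L generated by τ has the same rank as the subgroup of L generated by σ. Then τ = σ. Consequently, every strictly increasing chain of cones in L in which each cone is a proper face of the next has at most rank(L) + 1 elements. -/

import Mathlib

open Pointwise

section Helpers

variable {L : Type*} [AddCommGroup L]

/-- Transport finrank along the identification of `(span ℤ s).toAddSubgroup` with `span ℤ s`. -/
lemma finrank_closure_eq_finrank_span (s : Set L) :
    Module.finrank ℤ (AddSubgroup.closure s) = Module.finrank ℤ (Submodule.span ℤ s) := by
  rw [← Submodule.span_int_eq_addSubgroupClosure]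
  exact LinearEquiv.finrank_eq <| AddEquiv.toIntLinearEquiv
    { toFun := fun x => (⟨x.1, x.2⟩ : Submodule.span ℤ s)
      invFun := fun x => ⟨x.1, x.2⟩
      left_inv := fun x => rfl
      right_inv := fun x => rfl
      map_add' := fun x y => rfl }

variable [Module.Free ℤ L] [Module.Finite ℤ L]

lemma exists_nsmul_mem {A B : Submodule ℤ L} (hAB : A ≤ B)
    (h : Module.finrank ℤ A = Module.finrank ℤ B) {x : L} (hx : x ∈ B) :
    ∃ n : ℕ, 0 < n ∧ (n : ℤ) • x ∈ A := by
  by_contra hcon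
  push_neg at hcon
  have hA : ∀ n : ℤ, n ≠ 0 → n • x ∉ A := by
    intro n hn hmem
    rcases hn.lt_or_gt with h' | h'
    · refine hcon (-n).toNat (by omega) ?_
      have hco : (((-n).toNat : ℤ)) = -n := Int.toNat_of_nonneg (by omega)
      rw [hco, neg_smul]
      exact A.neg_mem hmem
    · refine hcon n.toNat (by omega) ?_
      rwa [Int.toNat_of_nonneg h'.le]
  set r := Module.finrank ℤ A with hr
  let v : Module.Basis (Fin r) ℤ A := Module.finBasis ℤ A
  -- the family in `L`
  let u : Fin (r + 1) → L := Fin.cons x (fun i => (v i : L))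
  have hu : LinearIndependent ℤ u := by
    rw [Fintype.linearIndependent_iff]
    intro g hg
    rw [Fin.sum_univ_succ] at hg
    simp only [u, Fin.cons_zero, Fin.cons_succ] at hg
    have hs : (∑ i : Fin r, g i.succ • ((v i : L))) ∈ A := by
      refine Submodule.sum_mem _ fun i _ => Submodule.smul_mem _ _ (v i).2
    have hg0 : g 0 = 0 := by
      by_contra hg0
      apply hA (g 0) hg0
      have : g 0 • x = -(∑ i : Fin r, g i.succ • ((v i : L))) := by
        rw [eq_neg_iff_add_eq_zero]; exact hg
      rw [this]
      exact A.neg_mem hs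
    have hsum0 : (∑ i : Fin r, g i.succ • (v i)) = 0 := by
      apply Subtype.ext
      push_cast
      rw [hg0, zero_smul, zero_add] at hg
      simpa using hg
    have hvi := Fintype.linearIndependent_iff.mp v.linearIndependent
      (fun i => g i.succ) hsum0
    intro i
    refine Fin.cases hg0 (fun j => hvi j) i
  -- but all values of `u` lie in `B`
  have hmemB : ∀ i, u i ∈ B := by
    intro i
    refine Fin.cases hx (fun j => hAB (v j).2) i
  let w : Fin (r + 1) → B := fun i => ⟨u i, hmemB i⟩
  have hw : LinearIndependent ℤ w := by
    have : u = B.subtype ∘ w := rfl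
    rw [this] at hu
    exact LinearIndependent.of_comp _ hu
  have := hw.fintype_card_le_finrank
  rw [Fintype.card_fin, ← h] at this
  omega

end Helpers

/-- An integral cone in `L`: a subset containing `0` and closed under addition. -/
def IsCone {L : Type*} [AddCommMonoid L] (σ : Set L) : Prop :=
  0 ∈ σ ∧ ∀ a ∈ σ, ∀ b ∈ σ, a + b ∈ σ

/-- A face of a cone `σ`: a nonempty subset `τ ⊆ σ` such that for `a, b ∈ σ`,
`a + b ∈ τ` if and only if `a ∈ τ` and `b ∈ τ`. -/
def IsFace {L : Type*} [AddCommMonoid L] (σ τ : Set L) : Prop :=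
  τ.Nonempty ∧ τ ⊆ σ ∧ ∀ a ∈ σ, ∀ b ∈ σ, (a + b ∈ τ ↔ a ∈ τ ∧ b ∈ τ)

section Face

variable {L : Type*} [AddCommGroup L]

lemma face_zero_mem {σ τ : Set L} (hσ : IsCone σ) (h : IsFace σ τ) : (0 : L) ∈ τ := by
  obtain ⟨⟨t, ht⟩, hsub, hface⟩ := h
  have := (hface t (hsub ht) 0 hσ.1).mp (by simpa using ht)
  exact this.2

lemma face_add_mem {σ τ : Set L} (h : IsFace σ τ) {a b : L} (ha : a ∈ τ) (hb : b ∈ τ) :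
    a + b ∈ τ :=
  (h.2.2 a (h.2.1 ha) b (h.2.1 hb)).mpr ⟨ha, hb⟩

lemma cone_nsmul_mem {σ : Set L} (h : IsCone σ) {x : L} (hx : x ∈ σ) (n : ℕ) : n • x ∈ σ := by
  induction n with
  | zero => simpa using h.1
  | succ k ih => rw [succ_nsmul]; exact h.2 _ ih _ hx

/-- From a positive multiple in the face, deduce membership in the face. -/
lemma face_of_nsmul_mem {σ τ : Set L} (hσ : IsCone σ) (h : IsFace σ τ) {x : L} (hx : x ∈ σ) :
    ∀ n : ℕ, 0 < n → n • x ∈ τ → x ∈ τ := by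
  intro n
  induction n with
  | zero => omega
  | succ k ih =>
    intro _ hmem
    rcases Nat.eq_zero_or_pos k with hk | hk
    · subst hk; simpa using hmem
    · rw [succ_nsmul] at hmem
      have := (h.2.2 _ (cone_nsmul_mem hσ hx k) x hx).mp hmem
      exact this.2

lemma mem_closure_sub {τ : Set L} (h0 : (0:L) ∈ τ)
    (hadd : ∀ a ∈ τ, ∀ b ∈ τ, a + b ∈ τ) {y : L} (hy : y ∈ AddSubgroup.closure τ) :
    ∃ t₁ ∈ τ, ∃ t₂ ∈ τ, y = t₁ - t₂ := by
  induction hy using AddSubgroup.closure_induction with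
  | mem z hz => exact ⟨z, hz, 0, h0, by simp⟩
  | zero => exact ⟨0, h0, 0, h0, by simp⟩
  | add a b _ _ iha ihb =>
    obtain ⟨a₁, ha₁, a₂, ha₂, rfl⟩ := iha
    obtain ⟨b₁, hb₁, b₂, hb₂, rfl⟩ := ihb
    exact ⟨a₁ + b₁, hadd _ ha₁ _ hb₁, a₂ + b₂, hadd _ ha₂ _ hb₂, by abel⟩
  | neg a _ iha =>
    obtain ⟨a₁, ha₁, a₂, ha₂, rfl⟩ := iha
    exact ⟨a₂, ha₂, a₁, ha₁, by abel⟩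

end Face

/-- a face of the same rank as the cone equals the cone, and any
strictly increasing chain of proper faces has at most `rank L + 1` elements. -/
theorem stmt6 {L : Type*} [AddCommGroup L] [Module.Free ℤ L] [Module.Finite ℤ L] :
    (∀ σ τ : Set L, IsCone σ → IsFace σ τ →
      Module.finrank ℤ (AddSubgroup.closure τ) =
        Module.finrank ℤ (AddSubgroup.closure σ) →
      τ = σ) ∧
    (∀ (n : ℕ) (c : Fin (n + 1) → Set L),
      (∀ i, IsCone (c i)) →
      (∀ i : Fin n, IsFace (c i.succ) (c i.castSucc) ∧ c i.castSucc ≠ c i.succ) →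
      n + 1 ≤ Module.finrank ℤ L + 1) := by
  have main : ∀ σ τ : Set L, IsCone σ → IsFace σ τ →
      Module.finrank ℤ (AddSubgroup.closure τ) =
        Module.finrank ℤ (AddSubgroup.closure σ) →
      τ = σ := by
    intro σ τ hσ hτ hrank
    apply Set.Subset.antisymm hτ.2.1
    intro x hx
    rw [finrank_closure_eq_finrank_span, finrank_closure_eq_finrank_span] at hrank
    have hle : Submodule.span ℤ τ ≤ Submodule.span ℤ σ := Submodule.span_mono hτ.2.1
    obtain ⟨n, hn, hmem⟩ := exists_nsmul_mem hle hrank (Submodule.subset_span hx)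
    rw [natCast_zsmul] at hmem
    have hmem' : (n • x : L) ∈ AddSubgroup.closure τ := by
      rw [← Submodule.span_int_eq_addSubgroupClosure]
      exact hmem
    obtain ⟨t₁, ht₁, t₂, ht₂, heq⟩ :=
      mem_closure_sub (face_zero_mem hσ hτ) (fun a ha b hb => face_add_mem hτ ha hb) hmem'
    -- n • x + t₂ = t₁ ∈ τ
    have hsum : n • x + t₂ ∈ τ := by
      rw [heq]; simpa using ht₁
    have hnx : n • x ∈ τ :=
      ((hτ.2.2 _ (cone_nsmul_mem hσ hx n) t₂ (hτ.2.1 ht₂)).mp hsum).1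
    exact face_of_nsmul_mem hσ hτ hx n hn hnx
  refine ⟨main, ?_⟩
  intro n c hcone hchain
  -- ranks strictly increase along the chain
  have hmonofin : ∀ s : Set L, Module.Finite ℤ (Submodule.span ℤ s) := fun s =>
    Module.Finite.iff_fg.mpr (IsNoetherian.noetherian _)
  set d : Fin (n + 1) → ℕ := fun i => Module.finrank ℤ (Submodule.span ℤ (c i)) with hd
  have hstep : ∀ i : Fin n, d i.castSucc < d i.succ := by
    intro i
    obtain ⟨hface, hne⟩ := hchain i
    have hle : Submodule.span ℤ (c i.castSucc) ≤ Submodule.span ℤ (c i.succ) :=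
      Submodule.span_mono hface.2.1
    haveI := hmonofin (c i.succ)
    have hle' : d i.castSucc ≤ d i.succ := Submodule.finrank_mono hle
    rcases hle'.lt_or_eq with h | h
    · exact h
    · exact absurd (main _ _ (hcone i.succ) hface
        (by rw [finrank_closure_eq_finrank_span, finrank_closure_eq_finrank_span]; exact h))
        hne
  have hbound : ∀ i : Fin (n + 1), (i : ℕ) ≤ d i := by
    intro i
    induction i using Fin.induction with
    | zero => simp
    | succ j ih =>
      have h1 := hstep j
      have ih' : (j : ℕ) ≤ d j.castSucc := by simpa using ih
      simp only [Fin.val_succ]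
      omega
  have hlast := hbound (Fin.last n)
  have hfin : d (Fin.last n) ≤ Module.finrank ℤ L := by
    haveI := hmonofin (c (Fin.last n))
    have : Submodule.span ℤ (c (Fin.last n)) ≤ ⊤ := le_top
    calc d (Fin.last n) ≤ Module.finrank ℤ (⊤ : Submodule ℤ L) := Submodule.finrank_mono this
      _ = Module.finrank ℤ L := finrank_top ℤ L
  simp only [Fin.val_last] at hlast
  omega
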